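/- For the Berg–Valent rates λ_k = (4k+1)(4k+2)^2(4k+3), the product satisfies ∏_{k=0}^{n-1} λ_k = 2^{8n} Γ(1/4+n) Γ(1/2+n)^2 Γ(3/4+n) / (Γ(1/4) Γ(1/2)^2 Γ(3/4)), and asymptotically ∏_{k=0}^{n-1} λ_k ~ 2^{8n} · 2√2 · (n/e)^{4n} as n → ∞. -/

import Mathlib

lemma natkey (n : ℕ) :
    (∏ k ∈ Finset.range n, ((4*k+1)*(4*k+2)^2*(4*k+3))) * (4^n * (Nat.factorial n)^2)
      = Nat.factorial (4*n) * Nat.factorial (2*n) := by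
  induction n with
  | zero => simp
  | succ n ih =>
    have e : Nat.factorial (4*(n+1)) * Nat.factorial (2*(n+1))
        = (Nat.factorial (4*n) * Nat.factorial (2*n))
            * ((4*n+4)*(4*n+3)*(4*n+2)*(4*n+1)*(2*n+2)*(2*n+1)) := by
      rw [show 4*(n+1) = ((((4*n)+1)+1)+1)+1 from by ring,
        show 2*(n+1) = ((2*n)+1)+1 from by ring,
        Nat.factorial_succ, Nat.factorial_succ, Nat.factorial_succ, Nat.factorial_succ,
        Nat.factorial_succ, Nat.factorial_succ]
      ring
    rw [Finset.prod_range_succ, e, ← ih, Nat.factorial_succ]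
    ring

lemma junk (s4 s2 s1 a4 a2 a1 p t u x r : ℝ) (hp : p ≠ 0) (ht : t ≠ 0)
    (hu : u ≠ 0) (ha1 : a1 ≠ 0) (hs1 : s1 ≠ 0) (hr : r ≠ 0)
    (h84 : a4 * a2 = 4 * r * x) (hsq : a1 ^ 2 = 2 * x) :
    s4 * (a4 * (u * (p^2*p^2))) * (s2 * (a2 * (t * p^2))) / (t * (s1 * (a1 * p))^2) /
      (u * (2 * r) * (p^2*p^2)) = s4 * s2 / s1 ^ 2 := by
  field_simp
  linear_combination (s4*s2) * h84 - (2*r*s4*s2) * hsq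

lemma stirling_fac (m : ℕ) (hm : 1 ≤ m) :
    ((Nat.factorial m : ℝ))
      = Stirling.stirlingSeq m * (Real.sqrt (2*(m:ℝ)) * ((m:ℝ) / Real.exp 1) ^ m) := by
  have hmpos : (0:ℝ) < m := by exact_mod_cast hm
  rw [Stirling.stirlingSeq]
  rw [div_mul_cancel₀]
  positivity

lemma stirling_ne (n : ℕ) (hn : 1 ≤ n) : Stirling.stirlingSeq n ≠ 0 := by
  have := stirling_fac n hn
  intro h
  rw [h, zero_mul] at this
  exact (Nat.factorial_ne_zero n) (by exact_mod_cast this)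

theorem stmt_16 (lam : ℕ → ℝ)
    (hlam : ∀ k : ℕ, lam k = (4 * (k : ℝ) + 1) * (4 * (k : ℝ) + 2) ^ 2 * (4 * (k : ℝ) + 3)) :
    (∀ n : ℕ, ∏ k ∈ Finset.range n, lam k
      = 2 ^ (8 * n) * Real.Gamma (1 / 4 + n) * Real.Gamma (1 / 2 + n) ^ 2 *
          Real.Gamma (3 / 4 + n) /
        (Real.Gamma (1 / 4) * Real.Gamma (1 / 2) ^ 2 * Real.Gamma (3 / 4))) ∧
    Filter.Tendsto
      (fun n : ℕ => (∏ k ∈ Finset.range n, lam k) /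
        (2 ^ (8 * n) * (2 * Real.sqrt 2) * ((n : ℝ) / Real.exp 1) ^ (4 * n)))
      Filter.atTop (nhds 1) := by
  have hC1 : Real.Gamma (1/4) ≠ 0 := (Real.Gamma_pos_of_pos (by norm_num)).ne'
  have hC2 : Real.Gamma (1/2) ≠ 0 := (Real.Gamma_pos_of_pos (by norm_num)).ne'
  have hC3 : Real.Gamma (3/4) ≠ 0 := (Real.Gamma_pos_of_pos (by norm_num)).ne'
  constructor
  · intro n
    induction n with
    | zero =>
      simp only [Finset.range_zero, Finset.prod_empty, Nat.cast_zero, add_zero, mul_zero,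
        pow_zero, one_mul, mul_one]
      rw [div_self (mul_ne_zero (mul_ne_zero hC1 (pow_ne_zero 2 hC2)) hC3)]
    | succ n ih =>
      rw [Finset.prod_range_succ, ih, hlam]
      have e1 : (1/4 : ℝ) + ((n:ℕ)+1 : ℕ) = (1/4 + n) + 1 := by push_cast; ring
      have e2 : (1/2 : ℝ) + ((n:ℕ)+1 : ℕ) = (1/2 + n) + 1 := by push_cast; ring
      have e3 : (3/4 : ℝ) + ((n:ℕ)+1 : ℕ) = (3/4 + n) + 1 := by push_cast; ring
      rw [e1, e2, e3, Real.Gamma_add_one (by positivity), Real.Gamma_add_one (by positivity),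
        Real.Gamma_add_one (by positivity)]
      have hp : (2:ℝ) ^ (8*(n+1)) = 2 ^ (8*n) * 256 := by
        rw [show 8*(n+1) = 8*n + 8 by ring, pow_add]; norm_num
      rw [hp]
      field_simp
      ring
  · -- part 2
    have key : ∀ n : ℕ, (∏ k ∈ Finset.range n, lam k)
        = ((Nat.factorial (4*n) : ℝ) * Nat.factorial (2*n)) / (4^n * (Nat.factorial n : ℝ)^2) := by
      intro n
      have hcast : (∏ k ∈ Finset.range n, lam k)
          = ((∏ k ∈ Finset.range n, ((4*k+1)*(4*k+2)^2*(4*k+3)) : ℕ) : ℝ) := by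
        rw [Nat.cast_prod]
        exact Finset.prod_congr rfl (fun k _ => by rw [hlam]; push_cast; ring)
      rw [hcast, eq_div_iff (by positivity)]
      exact_mod_cast congrArg (fun m : ℕ => (m : ℝ)) (natkey n)
    have hEq : ∀ n : ℕ, 1 ≤ n →
        (∏ k ∈ Finset.range n, lam k) /
          (2 ^ (8 * n) * (2 * Real.sqrt 2) * ((n : ℝ) / Real.exp 1) ^ (4 * n))
        = Stirling.stirlingSeq (4*n) * Stirling.stirlingSeq (2*n) / (Stirling.stirlingSeq n)^2 := by
      intro n hn
      have hnpos : (0:ℝ) < n := by exact_mod_cast hn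
      have he : (0:ℝ) < Real.exp 1 := Real.exp_pos 1
      set q : ℝ := (n:ℝ)/Real.exp 1 with hq
      have hqpos : 0 < q := by positivity
      have h84 : Real.sqrt (2*(4*(n:ℝ))) * Real.sqrt (2*(2*(n:ℝ))) = 4 * Real.sqrt 2 * n := by
        rw [← Real.sqrt_mul (by positivity)]
        rw [show (2*(4*(n:ℝ))) * (2*(2*n)) = (4*n)^2 * 2 by ring,
          Real.sqrt_mul (by positivity), Real.sqrt_sq (by positivity)]
        ring
      have hsq : Real.sqrt (2*(n:ℝ)) ^ 2 = 2*n := Real.sq_sqrt (by positivity)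
      have hs4 := stirling_fac (4*n) (by omega)
      have hs2 := stirling_fac (2*n) (by omega)
      have hs1 := stirling_fac n hn
      push_cast at hs4 hs2
      rw [key, hs4, hs2, hs1]
      rw [show ((4*(n:ℝ)) / Real.exp 1) ^ (4*n) = 2^(8*n) * q^(4*n) by
        rw [show (4*(n:ℝ))/Real.exp 1 = 4 * q by rw [hq]; ring, mul_pow,
          show (4:ℝ)^(4*n) = 2^(8*n) by rw [show (4:ℝ) = 2^2 by norm_num, ← pow_mul]; ring_nf]]
      rw [show ((2*(n:ℝ)) / Real.exp 1) ^ (2*n) = 2^(2*n) * q^(2*n) by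
        rw [show (2*(n:ℝ))/Real.exp 1 = 2 * q by rw [hq]; ring, mul_pow]]
      rw [show (4:ℝ)^n = 2^(2*n) by rw [show (4:ℝ) = 2^2 by norm_num, ← pow_mul]]
      have main := junk (Stirling.stirlingSeq (4*n)) (Stirling.stirlingSeq (2*n)) (Stirling.stirlingSeq n)
        (Real.sqrt (2*(4*(n:ℝ)))) (Real.sqrt (2*(2*(n:ℝ)))) (Real.sqrt (2*(n:ℝ)))
        (q^n) (2^(2*n)) (2^(8*n)) (n:ℝ) (Real.sqrt 2)
        (by positivity) (by positivity) (by positivity) (by positivity) (stirling_ne n hn) (by positivity)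
        h84 hsq
      rw [← main]
      rw [show q^(4*n) = (q^n)^2*(q^n)^2 by rw [← pow_add, ← pow_mul]; ring_nf,
          show q^(2*n) = (q^n)^2 by rw [← pow_mul]; ring_nf]
    have hlim : Filter.Tendsto
        (fun n : ℕ => Stirling.stirlingSeq (4*n) * Stirling.stirlingSeq (2*n) /
          (Stirling.stirlingSeq n)^2) Filter.atTop (nhds 1) := by
      have hpi : (0:ℝ) < Real.sqrt Real.pi := Real.sqrt_pos.mpr Real.pi_pos
      have h4 : Filter.Tendsto (fun n : ℕ => Stirling.stirlingSeq (4*n)) Filter.atTop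
          (nhds (Real.sqrt Real.pi)) :=
        Stirling.tendsto_stirlingSeq_sqrt_pi.comp
          (Filter.tendsto_atTop_atTop_of_monotone (fun a b h => by omega)
            (fun b => ⟨b, by omega⟩))
      have h2 : Filter.Tendsto (fun n : ℕ => Stirling.stirlingSeq (2*n)) Filter.atTop
          (nhds (Real.sqrt Real.pi)) :=
        Stirling.tendsto_stirlingSeq_sqrt_pi.comp
          (Filter.tendsto_atTop_atTop_of_monotone (fun a b h => by omega)
            (fun b => ⟨b, by omega⟩))
      have h1 : Filter.Tendsto (fun n : ℕ => (Stirling.stirlingSeq n)^2) Filter.atTop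
          (nhds (Real.sqrt Real.pi ^ 2)) :=
        Stirling.tendsto_stirlingSeq_sqrt_pi.pow 2
      have := (h4.mul h2).div h1 (by positivity)
      have heq1 : Real.sqrt Real.pi * Real.sqrt Real.pi / Real.sqrt Real.pi ^ 2 = 1 := by
        rw [← sq]
        exact div_self (by positivity)
      rwa [heq1] at this
    refine hlim.congr' ?_
    filter_upwards [Filter.eventually_ge_atTop 1] with n hn
    exact (hEq n hn).symm
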